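/- Let γ, γ' ∈ GL_n(E) be normal elements with the property that γ = γ' whenever γ and γ' are σ-conjugate. Let x, x' ∈ F_n be row vectors with entries in F and y, y' column vectors with entries in F⁻, and assume that the triples [σ(γ)γ, x, y] and [σ(γ')γ', x', y'] are regular semisimple elements of M_n(E). Then there exists h ∈ GL_n(E) with h⁻¹(σ(γ)γ)h = σ(γ')γ', xh = x' and h⁻¹y = y' if and only if γ = γ' and there exists t ∈ T_γ := {g ∈ GL_n(E) : g⁻¹γσ(g) = γ} with xt = x' and t⁻¹y = y'. -/

import Mathlib

/-!
STATEMENT 4: Matching of orbits on the general linear group side (Lemma on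
embedding X_rss into M_n(E)-orbits).
-/

open Matrix Polynomial

/-- A square matrix over a field `E` is regular semisimple if its characteristic
polynomial has `n` distinct roots in an algebraic closure of `E`. -/
def IsRegSemisimple {n : ℕ} {E : Type*} [Field E] (A : Matrix (Fin n) (Fin n) E) : Prop :=
  Multiset.card ((A.charpoly.map (algebraMap E (AlgebraicClosure E))).roots) = n ∧
    ((A.charpoly.map (algebraMap E (AlgebraicClosure E))).roots).Nodup

/-- A triple `[ξ, x, y] ∈ M_n(E)` (ξ a matrix, x a row vector, y a column vector)
is regular semisimple: ξ is regular semisimple, the row vectors x, xξ, …, xξⁿ⁻¹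
span E_n, and the column vectors y, ξy, …, ξⁿ⁻¹y span Eⁿ. -/
def TripleRegSemisimple {n : ℕ} {E : Type*} [Field E]
    (ξ : Matrix (Fin n) (Fin n) E) (x y : Fin n → E) : Prop :=
  IsRegSemisimple ξ ∧
    Submodule.span E (Set.range fun k : Fin n => Matrix.vecMul x (ξ ^ (k : ℕ))) = ⊤ ∧
    Submodule.span E (Set.range fun k : Fin n => Matrix.mulVec (ξ ^ (k : ℕ)) y) = ⊤

lemma aux_vanish {n : ℕ} {E : Type*} [Field E]
    {ξ ξ' d : Matrix (Fin n) (Fin n) E} {y' : Fin n → E}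
    (hspan : Submodule.span E (Set.range fun k : Fin n => Matrix.mulVec (ξ' ^ (k:ℕ)) y') = ⊤)
    (hint : ξ * d = d * ξ') (hvan : d.mulVec y' = 0) : d = 0 := by
  have hk : ∀ k : ℕ, d * ξ' ^ k = ξ ^ k * d := by
    intro k
    induction k with
    | zero => simp
    | succ m ih =>
        rw [pow_succ, pow_succ, ← mul_assoc, ih, mul_assoc, ← hint, ← mul_assoc]
  have hv : ∀ k : ℕ, d.mulVec ((ξ' ^ k).mulVec y') = 0 := by
    intro k
    rw [Matrix.mulVec_mulVec, hk, ← Matrix.mulVec_mulVec, hvan, Matrix.mulVec_zero]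
  have hlin : d.mulVecLin = 0 := by
    apply LinearMap.ext_on hspan
    rintro v ⟨k, rfl⟩
    simpa using hv k
  have := Matrix.toLin'.injective
    (by simpa [Matrix.toLin'_apply'] using hlin : Matrix.toLin' d = Matrix.toLin' 0)
  simpa using this

lemma aux_poly {n : ℕ} {E : Type*} [Field E]
    {ξ' m : Matrix (Fin n) (Fin n) E} {y' : Fin n → E}
    (hspan : Submodule.span E (Set.range fun k : Fin n => Matrix.mulVec (ξ' ^ (k:ℕ)) y') = ⊤)
    (hcomm : m * ξ' = ξ' * m) :
    ∃ c : Fin n → E, m = ∑ k : Fin n, c k • ξ' ^ (k:ℕ) := by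
  have hmem : m.mulVec y' ∈ Submodule.span E
      (Set.range fun k : Fin n => Matrix.mulVec (ξ' ^ (k:ℕ)) y') := by
    rw [hspan]; trivial
  obtain ⟨c, hc⟩ := (Submodule.mem_span_range_iff_exists_fun E).mp hmem
  refine ⟨c, ?_⟩
  set P : Matrix (Fin n) (Fin n) E := ∑ k : Fin n, c k • ξ' ^ (k:ℕ) with hP
  have hPcomm : P * ξ' = ξ' * P := by
    rw [hP, Finset.sum_mul, Finset.mul_sum]
    refine Finset.sum_congr rfl fun k _ => ?_
    rw [smul_mul_assoc, mul_smul_comm, ← pow_succ, ← pow_succ']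
  have hPy : P.mulVec y' = m.mulVec y' := by
    rw [hP, ← hc]
    ext i
    simp only [Matrix.mulVec, dotProduct, Finset.sum_apply, Matrix.sum_apply,
      Matrix.smul_apply, smul_eq_mul, Finset.sum_mul, Pi.smul_apply, Finset.mul_sum]
    rw [Finset.sum_comm]
    refine Finset.sum_congr rfl fun k _ => Finset.sum_congr rfl fun j _ => ?_
    ring
  have h0 : (m - P) = 0 := by
    apply aux_vanish (ξ := ξ') hspan
    · rw [Matrix.mul_sub, Matrix.sub_mul, hcomm, hPcomm]
    · rw [Matrix.sub_mulVec, hPy, sub_self]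
  exact sub_eq_zero.mp h0

lemma aux_commute {n : ℕ} {E : Type*} [Field E]
    {ξ' a b : Matrix (Fin n) (Fin n) E} {y' : Fin n → E}
    (hspan : Submodule.span E (Set.range fun k : Fin n => Matrix.mulVec (ξ' ^ (k:ℕ)) y') = ⊤)
    (ha : a * ξ' = ξ' * a) (hb : b * ξ' = ξ' * b) : a * b = b * a := by
  obtain ⟨c, rfl⟩ := aux_poly hspan hb
  rw [Finset.mul_sum, Finset.sum_mul]
  refine Finset.sum_congr rfl fun k _ => ?_
  rw [mul_smul_comm, smul_mul_assoc,
    ((Commute.pow_right ha k) : a * ξ' ^ (k:ℕ) = ξ' ^ (k:ℕ) * a)]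

lemma aux_map_mulVec {n : ℕ} {E : Type*} [Field E] (f : E →+* E)
    (A : Matrix (Fin n) (Fin n) E) (v : Fin n → E) :
    (A.map ⇑f).mulVec (fun i => f (v i)) = fun i => f (A.mulVec v i) := by
  ext i
  simp [Matrix.mulVec, dotProduct, map_sum]

theorem gl_side_orbit_matching
    {F E : Type*} [Field F] [Field E] [Algebra F E] [CharZero F] [CharZero E]
    (σ : E ≃ₐ[F] E)
    (hσ2 : ∀ x : E, σ (σ x) = x)
    (hfix : ∀ x : E, σ x = x ↔ x ∈ Set.range (algebraMap F E))
    (hdeg : Module.finrank F E = 2)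
    (n : ℕ) (hn : 1 ≤ n)
    (γ γ' : Matrix (Fin n) (Fin n) E) (hγ : IsUnit γ) (hγ' : IsUnit γ')
    (hγnormal : ∀ i j, ((γ.map ⇑σ) * γ) i j ∈ Set.range (algebraMap F E))
    (hγ'normal : ∀ i j, ((γ'.map ⇑σ) * γ') i j ∈ Set.range (algebraMap F E))
    (hrep : (∃ g : Matrix (Fin n) (Fin n) E, IsUnit g ∧ g⁻¹ * γ * g.map ⇑σ = γ') → γ = γ')
    (x x' : Fin n → E)
    (hx : ∀ i, x i ∈ Set.range (algebraMap F E))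
    (hx' : ∀ i, x' i ∈ Set.range (algebraMap F E))
    (y y' : Fin n → E)
    (hy : ∀ i, σ (y i) = - y i)
    (hy' : ∀ i, σ (y' i) = - y' i)
    (hrss : TripleRegSemisimple ((γ.map ⇑σ) * γ) x y)
    (hrss' : TripleRegSemisimple ((γ'.map ⇑σ) * γ') x' y') :
    (∃ h : Matrix (Fin n) (Fin n) E, IsUnit h ∧
        h⁻¹ * ((γ.map ⇑σ) * γ) * h = (γ'.map ⇑σ) * γ' ∧
        Matrix.vecMul x h = x' ∧ Matrix.mulVec h⁻¹ y = y') ↔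
    (γ = γ' ∧ ∃ t : Matrix (Fin n) (Fin n) E, IsUnit t ∧ t⁻¹ * γ * t.map ⇑σ = γ ∧
        Matrix.vecMul x t = x' ∧ Matrix.mulVec t⁻¹ y = y') := by
  classical
  have hmm : ∀ A B : Matrix (Fin n) (Fin n) E, (A*B).map ⇑σ = A.map ⇑σ * B.map ⇑σ :=
    fun A B => Matrix.map_mul (f := (σ : E →+* E))
  have hss : ∀ A : Matrix (Fin n) (Fin n) E, (A.map ⇑σ).map ⇑σ = A := fun A => by
    rw [Matrix.map_map, show (⇑σ ∘ ⇑σ) = id from funext hσ2, Matrix.map_id]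
  have hmone : (1 : Matrix (Fin n) (Fin n) E).map ⇑σ = 1 :=
    Matrix.map_one _ (map_zero σ) (map_one σ)
  set ξ := γ.map ⇑σ * γ with hξdef
  set ξ' := γ'.map ⇑σ * γ' with hξ'def
  have σξ : ξ.map ⇑σ = ξ := by
    ext i j
    exact (hfix _).mpr (hγnormal i j)
  have σξ' : ξ'.map ⇑σ = ξ' := by
    ext i j
    exact (hfix _).mpr (hγ'normal i j)
  have hgs : γ * γ.map ⇑σ = ξ := by
    conv_rhs => rw [← σξ]
    rw [hξdef, hmm, hss]
  have hgs' : γ' * γ'.map ⇑σ = ξ' := by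
    conv_rhs => rw [← σξ']
    rw [hξ'def, hmm, hss]
  have γcommξ : γ * ξ = ξ * γ := by rw [hξdef, ← mul_assoc, hgs]
  have γ'commξ' : γ' * ξ' = ξ' * γ' := by rw [hξ'def, ← mul_assoc, hgs']
  constructor
  · rintro ⟨h, hhu, e1, e2, e3⟩
    have hdet : IsUnit h.det := (Matrix.isUnit_iff_isUnit_det h).mp hhu
    have e1' : ξ * h = h * ξ' := by
      have h0 : h * (h⁻¹ * ξ * h) = h * ξ' := by rw [e1]
      rwa [← mul_assoc, ← mul_assoc, Matrix.mul_nonsing_inv _ hdet, one_mul] at h0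
    have hy_eq : y = h.mulVec y' := by
      rw [← e3, Matrix.mulVec_mulVec, Matrix.mul_nonsing_inv _ hdet, Matrix.one_mulVec]
    have e1σ : ξ * h.map ⇑σ = h.map ⇑σ * ξ' := by
      have h0 := congrArg (fun A => Matrix.map A ⇑σ) e1'
      simp only [hmm] at h0
      rwa [σξ, σξ'] at h0
    have hyσ : y = (h.map ⇑σ).mulVec y' := by
      have h0 : (h.map ⇑σ).mulVec (fun i => σ (y' i)) = fun i => σ (h.mulVec y' i) :=
        aux_map_mulVec (σ : E →+* E) h y'
      have hl : (fun i => σ (y' i)) = -y' := funext fun i => by rw [hy' i]; rfl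
      have hr : (fun i => σ (h.mulVec y' i)) = -y := by
        rw [← hy_eq]
        exact funext fun i => by rw [hy i]; rfl
      have h0' : (h.map ⇑σ).mulVec (-y') = -y := by rw [← hl, h0, hr]
      rw [Matrix.mulVec_neg] at h0'
      exact (neg_injective h0').symm
    have hσh : h.map ⇑σ = h := by
      have hint : ξ * (h - h.map ⇑σ) = (h - h.map ⇑σ) * ξ' := by
        rw [Matrix.mul_sub, Matrix.sub_mul, e1', e1σ]
      have hvan : (h - h.map ⇑σ).mulVec y' = 0 := by
        rw [Matrix.sub_mulVec, ← hy_eq, ← hyσ, sub_self]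
      exact (sub_eq_zero.mp (aux_vanish hrss'.2.2 hint hvan)).symm
    -- δ
    set δ := h⁻¹ * γ * h with hδdef
    have hinvu : IsUnit (h⁻¹ : Matrix (Fin n) (Fin n) E) :=
      Matrix.isUnit_nonsing_inv_iff.mpr hhu
    have hδu : IsUnit δ := (hinvu.mul hγ).mul hhu
    have hδdet : IsUnit δ.det := (Matrix.isUnit_iff_isUnit_det δ).mp hδu
    have hcancel : ∀ A B : Matrix (Fin n) (Fin n) E, h * A = h * B → A = B := by
      intro A B hAB
      have h0 := congrArg (fun Z => h⁻¹ * Z) hAB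
      simpa [← mul_assoc, Matrix.nonsing_inv_mul _ hdet] using h0
    have hhδ : h * δ = γ * h := by
      rw [hδdef, ← mul_assoc, ← mul_assoc, Matrix.mul_nonsing_inv _ hdet, one_mul]
    have hinvmap : (h⁻¹ : Matrix (Fin n) (Fin n) E).map ⇑σ = h⁻¹ := by
      have h0 : h * (h⁻¹ : Matrix (Fin n) (Fin n) E).map ⇑σ = 1 := by
        have h1 := congrArg (fun A => Matrix.map A ⇑σ) (Matrix.mul_nonsing_inv _ hdet)
        simp only [hmm] at h1
        rwa [hσh, hmone] at h1
      exact (Matrix.inv_eq_right_inv h0).symm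
    have σδ : δ.map ⇑σ = h⁻¹ * γ.map ⇑σ * h := by
      rw [hδdef, hmm, hmm, hinvmap, hσh]
    have hδξ' : δ * ξ' = ξ' * δ := by
      apply hcancel
      calc h * (δ * ξ') = (γ * h) * ξ' := by rw [← mul_assoc, hhδ]
        _ = γ * (ξ * h) := by rw [mul_assoc, ← e1']
        _ = (ξ * γ) * h := by rw [← mul_assoc, γcommξ]
        _ = ξ * (h * δ) := by rw [mul_assoc, hhδ]
        _ = h * (ξ' * δ) := by rw [← mul_assoc, e1', mul_assoc]
    have hγ'det : IsUnit γ'.det := (Matrix.isUnit_iff_isUnit_det γ').mp hγ'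
    have hγ'σu : IsUnit (γ'.map ⇑σ) := by
      simpa using hγ'.map (RingHom.mapMatrix (σ : E →+* E))
    have hγ'σdet : IsUnit (γ'.map ⇑σ).det := (Matrix.isUnit_iff_isUnit_det _).mp hγ'σu
    have hξ'u : IsUnit ξ' := by rw [hξ'def]; exact hγ'σu.mul hγ'
    have hξ'det : IsUnit ξ'.det := (Matrix.isUnit_iff_isUnit_det _).mp hξ'u
    have hγ'σξ' : γ'.map ⇑σ * ξ' = ξ' * γ'.map ⇑σ := by
      have h0 := congrArg (fun A => Matrix.map A ⇑σ) γ'commξ'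
      simp only [hmm] at h0
      rwa [σξ'] at h0
    have hZinv : ∀ A : Matrix (Fin n) (Fin n) E, IsUnit A.det →
        A * ξ' = ξ' * A → A⁻¹ * ξ' = ξ' * A⁻¹ := by
      intro A hA hAc
      calc A⁻¹ * ξ' = A⁻¹ * ξ' * (A * A⁻¹) := by rw [Matrix.mul_nonsing_inv _ hA, mul_one]
        _ = A⁻¹ * (ξ' * A) * A⁻¹ := by noncomm_ring
        _ = A⁻¹ * (A * ξ') * A⁻¹ := by rw [hAc]
        _ = (A⁻¹ * A) * (ξ' * A⁻¹) := by noncomm_ring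
        _ = ξ' * A⁻¹ := by rw [Matrix.nonsing_inv_mul _ hA, one_mul]
    have hγ'invmap : (γ'⁻¹ : Matrix (Fin n) (Fin n) E).map ⇑σ = (γ'.map ⇑σ)⁻¹ := by
      have h0 : γ'.map ⇑σ * (γ'⁻¹ : Matrix (Fin n) (Fin n) E).map ⇑σ = 1 := by
        have h1 := congrArg (fun A => Matrix.map A ⇑σ) (Matrix.mul_nonsing_inv _ hγ'det)
        simp only [hmm] at h1
        rwa [hmone] at h1
      exact (Matrix.inv_eq_right_inv h0).symm
    set u := δ * γ'⁻¹ with hudef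
    have hγ'inv_u : IsUnit (γ'⁻¹ : Matrix (Fin n) (Fin n) E) :=
      Matrix.isUnit_nonsing_inv_iff.mpr hγ'
    have huu : IsUnit u := hδu.mul hγ'inv_u
    have hudet : IsUnit u.det := (Matrix.isUnit_iff_isUnit_det u).mp huu
    have hγ'invξ' := hZinv γ' hγ'det γ'commξ'
    have huξ' : u * ξ' = ξ' * u := by
      rw [hudef]
      calc δ * γ'⁻¹ * ξ' = δ * (γ'⁻¹ * ξ') := by noncomm_ring
        _ = δ * (ξ' * γ'⁻¹) := by rw [hγ'invξ']
        _ = (δ * ξ') * γ'⁻¹ := by noncomm_ring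
        _ = ξ' * (δ * γ'⁻¹) := by rw [hδξ']; noncomm_ring
    have hδσδ : δ.map ⇑σ * δ = ξ' := by
      rw [σδ, hδdef]
      calc h⁻¹ * γ.map ⇑σ * h * (h⁻¹ * γ * h)
          = h⁻¹ * γ.map ⇑σ * (h * h⁻¹) * (γ * h) := by noncomm_ring
        _ = h⁻¹ * (γ.map ⇑σ * γ) * h := by rw [Matrix.mul_nonsing_inv _ hdet]; noncomm_ring
        _ = ξ' := by rw [← hξdef]; exact e1
    have σu_mul : u.map ⇑σ * u = 1 := by
      have hcomm1 : (γ'.map ⇑σ)⁻¹ * δ = δ * (γ'.map ⇑σ)⁻¹ :=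
        aux_commute hrss'.2.2 (hZinv _ hγ'σdet hγ'σξ') hδξ'
      rw [hudef, hmm, hγ'invmap]
      calc δ.map ⇑σ * (γ'.map ⇑σ)⁻¹ * (δ * γ'⁻¹)
          = δ.map ⇑σ * ((γ'.map ⇑σ)⁻¹ * δ) * γ'⁻¹ := by noncomm_ring
        _ = δ.map ⇑σ * (δ * (γ'.map ⇑σ)⁻¹) * γ'⁻¹ := by rw [hcomm1]
        _ = (δ.map ⇑σ * δ) * ((γ'.map ⇑σ)⁻¹ * γ'⁻¹) := by noncomm_ring
        _ = ξ' * (γ' * γ'.map ⇑σ)⁻¹ := by rw [hδσδ, ← Matrix.mul_inv_rev]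
        _ = ξ' * ξ'⁻¹ := by rw [hgs']
        _ = 1 := Matrix.mul_nonsing_inv _ hξ'det
    have σu_inv : u.map ⇑σ = u⁻¹ := (Matrix.inv_eq_left_inv σu_mul).symm
    -- purely imaginary element
    obtain ⟨e, he⟩ : ∃ e : E, σ e ≠ e := by
      by_contra hcon
      push_neg at hcon
      have hsurj : Function.Surjective (algebraMap F E) := fun z => by
        obtain ⟨a, ha⟩ := (hfix z).mp (hcon z); exact ⟨a, ha⟩
      have heq := (LinearEquiv.ofBijective (Algebra.linearMap F E)
        ⟨(algebraMap F E).injective, hsurj⟩).finrank_eq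
      rw [Module.finrank_self, hdeg] at heq
      norm_num at heq
    set τ : E := e - σ e with hτdef
    have hστ : σ τ = -τ := by rw [hτdef, map_sub, hσ2]; ring
    have hτ0 : τ ≠ 0 := sub_ne_zero.mpr (Ne.symm he)
    -- find a good scalar a
    obtain ⟨a, ha_mem, hadet⟩ :
        ∃ a ∈ Set.range (algebraMap F E),
          ((a • ((1:Matrix (Fin n) (Fin n) E) + u) + τ • (1 - u)).det ≠ 0) := by
      set p : E[X] := ((X : E[X]) • ((1+u).map C) +
        (C τ) • (((1:Matrix (Fin n) (Fin n) E) - u).map C)).det with hp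
      have heval : ∀ a : E,
          p.eval a = (a • ((1:Matrix (Fin n) (Fin n) E) + u) + τ • (1 - u)).det := by
        intro a
        have h1 : (evalRingHom a) p
            = (((X : E[X]) • ((1+u).map C) +
              (C τ) • (((1:Matrix (Fin n) (Fin n) E) - u).map C)).map (evalRingHom a)).det := by
          rw [hp, RingHom.map_det, RingHom.mapMatrix_apply]
        have h2 : (((X : E[X]) • ((1+u).map C) +
              (C τ) • (((1:Matrix (Fin n) (Fin n) E) - u).map C)).map (evalRingHom a))
            = a • ((1:Matrix (Fin n) (Fin n) E) + u) + τ • (1 - u) := by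
          ext i j
          simp [Matrix.map_apply, Matrix.add_apply, Matrix.smul_apply, smul_eq_mul, mul_add]
          ring
        rw [show p.eval a = (evalRingHom a) p from rfl, h1, h2]
      have hpτ : p.eval τ ≠ 0 := by
        rw [heval τ]
        have h3 : τ • ((1:Matrix (Fin n) (Fin n) E) + u) + τ • (1 - u)
            = (2*τ) • (1:Matrix (Fin n) (Fin n) E) := by
          rw [← smul_add, show ((1:Matrix (Fin n) (Fin n) E)+u)+(1-u)
            = (2:E)•(1:Matrix (Fin n) (Fin n) E) from by rw [two_smul]; abel, smul_smul, mul_comm]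
        rw [h3, Matrix.det_smul, Matrix.det_one, mul_one]
        exact pow_ne_zero _ (mul_ne_zero two_ne_zero hτ0)
      have hp0 : p ≠ 0 := fun h0 => hpτ (by rw [h0, eval_zero])
      have hfin := Polynomial.finite_setOf_isRoot hp0
      have hinf : (Set.range (algebraMap F E)).Infinite :=
        Set.infinite_range_of_injective (algebraMap F E).injective
      by_contra hcon
      push_neg at hcon
      exact hinf (hfin.subset fun s hs =>
        show p.IsRoot s from by rw [Polynomial.IsRoot, heval s]; exact hcon s hs)
    have σa : σ a = a := (hfix a).mpr ha_mem
    set v := a • ((1:Matrix (Fin n) (Fin n) E) + u) + τ • (1 - u) with hvdef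
    have hvdet : IsUnit v.det := isUnit_iff_ne_zero.mpr hadet
    have hvu : IsUnit v := (Matrix.isUnit_iff_isUnit_det v).mpr hvdet
    have hmsmul : ∀ (c : E) (A : Matrix (Fin n) (Fin n) E),
        (c • A).map ⇑σ = σ c • A.map ⇑σ := by
      intro c A; ext i j
      simp [Matrix.map_apply, Matrix.smul_apply, smul_eq_mul, _root_.map_mul]
    have hmsub : ∀ (A B : Matrix (Fin n) (Fin n) E),
        (A - B).map ⇑σ = A.map ⇑σ - B.map ⇑σ := by
      intro A B; ext i j
      simp [Matrix.map_apply, Matrix.sub_apply, map_sub]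
    have hmadd : ∀ (A B : Matrix (Fin n) (Fin n) E),
        (A + B).map ⇑σ = A.map ⇑σ + B.map ⇑σ := by
      intro A B; ext i j
      simp [Matrix.map_apply, Matrix.add_apply, map_add]
    have σv : v.map ⇑σ = a • ((1:Matrix (Fin n) (Fin n) E) + u⁻¹) + (-τ) • (1 - u⁻¹) := by
      rw [hvdef, hmadd, hmsmul, hmsmul, hmadd, hmsub, hmone, σa, hστ, σu_inv]
    have hkeyv : u * v.map ⇑σ = v := by
      rw [σv, hvdef, mul_add, mul_smul_comm, mul_smul_comm, mul_add, mul_sub, mul_one,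
        Matrix.mul_nonsing_inv _ hudet]
      module
    have hvξ' : v * ξ' = ξ' * v := by
      rw [hvdef, add_mul, mul_add, smul_mul_assoc, mul_smul_comm, smul_mul_assoc,
        mul_smul_comm, add_mul, mul_add, sub_mul, mul_sub, one_mul, mul_one, huξ']
    set g := h * v with hgdef
    have hgu : IsUnit g := hhu.mul hvu
    have hγ'v : γ' * v = v * γ' := aux_commute hrss'.2.2 γ'commξ' hvξ'
    have hδγ' : δ * γ' = γ' * δ := aux_commute hrss'.2.2 hδξ' γ'commξ'
    have hvσ_eq : v.map ⇑σ = u⁻¹ * v := by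
      have h0 := congrArg (fun A => u⁻¹ * A) hkeyv
      simpa [← mul_assoc, Matrix.nonsing_inv_mul _ hudet] using h0
    have hδu_inv : δ * u⁻¹ = γ' := by
      rw [hudef, Matrix.mul_inv_rev, Matrix.nonsing_inv_nonsing_inv _ hγ'det]
      calc δ * (γ' * δ⁻¹) = (δ * γ') * δ⁻¹ := by noncomm_ring
        _ = γ' * (δ * δ⁻¹) := by rw [hδγ']; noncomm_ring
        _ = γ' := by rw [Matrix.mul_nonsing_inv _ hδdet, mul_one]
    have hconj : g⁻¹ * γ * g.map ⇑σ = γ' := by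
      rw [hgdef, hmm, hσh, Matrix.mul_inv_rev]
      calc v⁻¹ * h⁻¹ * γ * (h * v.map ⇑σ)
          = v⁻¹ * (h⁻¹ * γ * h) * v.map ⇑σ := by noncomm_ring
        _ = v⁻¹ * δ * (u⁻¹ * v) := by rw [← hδdef, hvσ_eq]
        _ = v⁻¹ * (δ * u⁻¹) * v := by noncomm_ring
        _ = v⁻¹ * (γ' * v) := by rw [hδu_inv]; noncomm_ring
        _ = v⁻¹ * (v * γ') := by rw [hγ'v]
        _ = γ' := by rw [← mul_assoc, Matrix.nonsing_inv_mul _ hvdet, one_mul]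
    have hγeq : γ = γ' := hrep ⟨g, hgu, hconj⟩
    refine ⟨hγeq, h, hhu, ?_, e2, e3⟩
    rw [hσh]
    have hξeq : ξ' = ξ := by rw [hξ'def, hξdef, hγeq]
    rw [hξeq] at e1'
    have hγh : γ * h = h * γ := aux_commute hrss.2.2 γcommξ e1'.symm
    calc h⁻¹ * γ * h = h⁻¹ * (γ * h) := by noncomm_ring
      _ = h⁻¹ * (h * γ) := by rw [hγh]
      _ = γ := by rw [← mul_assoc, Matrix.nonsing_inv_mul _ hdet, one_mul]
  · rintro ⟨hγeq, t, htu, ht1, ht2, ht3⟩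
    have htdet : IsUnit t.det := (Matrix.isUnit_iff_isUnit_det t).mp htu
    refine ⟨t, htu, ?_, ht2, ht3⟩
    have hξξ' : ξ' = ξ := by rw [hξ'def, hξdef, hγeq]
    rw [hξξ']
    have hts : γ * t.map ⇑σ = t * γ := by
      have h0 : t * (t⁻¹ * γ * t.map ⇑σ) = t * γ := by rw [ht1]
      rwa [← mul_assoc, ← mul_assoc, Matrix.mul_nonsing_inv _ htdet, one_mul] at h0
    have hts2 : γ.map ⇑σ * t = t.map ⇑σ * γ.map ⇑σ := by
      have h0 := congrArg (fun A => Matrix.map A ⇑σ) hts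
      simp only [hmm] at h0
      rwa [hss] at h0
    have hcomm : t * ξ = ξ * t := by
      calc t * ξ = t * (γ * γ.map ⇑σ) := by rw [hgs]
        _ = (t * γ) * γ.map ⇑σ := by noncomm_ring
        _ = (γ * t.map ⇑σ) * γ.map ⇑σ := by rw [hts]
        _ = γ * (t.map ⇑σ * γ.map ⇑σ) := by noncomm_ring
        _ = γ * (γ.map ⇑σ * t) := by rw [← hts2]
        _ = ξ * t := by rw [← mul_assoc, hgs]
    rw [mul_assoc, ← hcomm, ← mul_assoc, Matrix.nonsing_inv_mul _ htdet, one_mul]
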